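/- Let p be a prime, n ≥ 1, and β an integer with gcd(p,β) = 1. Any power series in ℤ[[x]] of the form pⁿ + βx + c₂x² + c₃x³ + ⋯ is irreducible in ℤ[[x]]. -/

import Mathlib

theorem stmt_14 (p : ℕ) (hp : p.Prime) (n : ℕ) (hn : 1 ≤ n) (β : ℤ)
    (hβ : Int.gcd (p : ℤ) β = 1) (f : PowerSeries ℤ)
    (h0 : PowerSeries.coeff 0 f = (p : ℤ) ^ n)
    (h1 : PowerSeries.coeff 1 f = β) :
    Irreducible f := by
  have hpZ : Prime (p : ℤ) := Nat.prime_iff_prime_int.mp hp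
  have hc0 : PowerSeries.constantCoeff f = (p : ℤ) ^ n := by
    rw [← PowerSeries.coeff_zero_eq_constantCoeff, h0]
  have hpβ : ¬ (p : ℤ) ∣ β := by
    intro h
    exact hpZ.not_unit ((Int.isCoprime_iff_gcd_eq_one.mpr hβ).isUnit_of_dvd' dvd_rfl h)
  constructor
  · intro hu
    have := PowerSeries.isUnit_constantCoeff f hu
    rw [hc0] at this
    exact hpZ.not_unit (isUnit_of_dvd_one
      (dvd_trans (dvd_pow_self _ (Nat.one_le_iff_ne_zero.mp hn)) this.dvd))
  · intro a b hab
    by_contra hcon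
    push_neg at hcon
    obtain ⟨ha, hb⟩ := hcon
    rw [PowerSeries.isUnit_iff_constantCoeff] at ha hb
    have hmul : PowerSeries.constantCoeff a * PowerSeries.constantCoeff b = (p : ℤ) ^ n := by
      rw [← hc0, hab, map_mul]
    have hdvd : ∀ g : PowerSeries ℤ, ¬ IsUnit (PowerSeries.constantCoeff g) →
        PowerSeries.constantCoeff g ∣ (p : ℤ) ^ n → (p : ℤ) ∣ PowerSeries.constantCoeff g := by
      intro g hg hgd
      by_contra hnd
      obtain ⟨i, hi, hieq⟩ := (dvd_prime_pow hpZ n).mp hgd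
      cases i with
      | zero => exact hg (hieq.symm.isUnit (by simp))
      | succ i => exact hnd ((dvd_pow_self (p : ℤ) (Nat.succ_ne_zero i)).trans hieq.symm.dvd)
    have hpa : (p : ℤ) ∣ PowerSeries.constantCoeff a :=
      hdvd a ha ⟨_, hmul.symm⟩
    have hpb : (p : ℤ) ∣ PowerSeries.constantCoeff b :=
      hdvd b hb ⟨_, by rw [← hmul]; ring⟩
    have hco1 : PowerSeries.coeff 1 f =
        PowerSeries.constantCoeff a * PowerSeries.coeff 1 b +
        PowerSeries.coeff 1 a * PowerSeries.constantCoeff b := by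
      rw [hab, PowerSeries.coeff_mul,
        show (Finset.HasAntidiagonal.antidiagonal 1 : Finset (ℕ × ℕ)) = {(0, 1), (1, 0)} from rfl]
      simp [PowerSeries.coeff_zero_eq_constantCoeff]
    rw [h1] at hco1
    exact hpβ (hco1 ▸ dvd_add (hpa.mul_right _) (hpb.mul_left _))
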